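/- Fix k ≥ 2 and let ψ = 1/(2k−1). There is no integer r ∈ {−(k−1),...,k−1} together with joint distributions η, η′ on {0,...,k−1}² having the same marginals such that P_η[X−Y ≤ r−1] < ψ and P_{η′}[X−Y < r] > 1 − ψ. (This is the key contradiction step in the upper bound for the minimum median width.) -/
import Mathlib


open Finset

def IsDist (k : ℕ) (p : Fin k → ℝ) : Prop :=
  (∀ x, 0 ≤ p x) ∧ ∑ x, p x = 1

def IsJoint (k : ℕ) (η : Fin k → Fin k → ℝ) : Prop :=
  (∀ x y, 0 ≤ η x y) ∧ ∑ x, ∑ y, η x y = 1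

def margA (k : ℕ) (η : Fin k → Fin k → ℝ) (x : Fin k) : ℝ := ∑ y, η x y

def margB (k : ℕ) (η : Fin k → Fin k → ℝ) (y : Fin k) : ℝ := ∑ x, η x y

noncomputable def qLow (k : ℕ) (r : ℝ) (η : Fin k → Fin k → ℝ) : ℝ :=
  ∑ x : Fin k, ∑ y : Fin k, if ((x : ℕ) : ℝ) - ((y : ℕ) : ℝ) < r then η x y else 0

noncomputable def qUp (k : ℕ) (r : ℝ) (η : Fin k → Fin k → ℝ) : ℝ :=
  ∑ x : Fin k, ∑ y : Fin k, if ((x : ℕ) : ℝ) - ((y : ℕ) : ℝ) ≤ r then η x y else 0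

noncomputable def ate (k : ℕ) (η : Fin k → Fin k → ℝ) : ℝ :=
  ∑ x : Fin k, ∑ y : Fin k, (((x : ℕ) : ℝ) - ((y : ℕ) : ℝ)) * η x y

noncomputable def nuL (k : ℕ) (r : ℝ) (ηa ηb : Fin k → ℝ) : ℝ :=
  sSup {v | ∃ η, IsJoint k η ∧ margA k η = ηa ∧ margB k η = ηb ∧ v = qLow k r η}

noncomputable def nuU (k : ℕ) (r : ℝ) (ηa ηb : Fin k → ℝ) : ℝ :=
  sInf {v | ∃ η, IsJoint k η ∧ margA k η = ηa ∧ margB k η = ηb ∧ v = qUp k r η}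

noncomputable def widthOf (k : ℕ) (r : ℝ) (ηa ηb : Fin k → ℝ) : ℝ :=
  max (max (nuL k r ηa ηb - 1/2) 0) (max (1/2 - nuU k r ηa ηb) 0)

noncomputable def epsStar (k : ℕ) (ηa ηb : Fin k → ℝ) : ℝ :=
  sInf {e | ∃ r : ℤ, -((k : ℤ) - 1) ≤ r ∧ r ≤ (k : ℤ) - 1 ∧ e = widthOf k (r : ℝ) ηa ηb}

noncomputable def dTV (k : ℕ) (p q : Fin k → ℝ) : ℝ := (1/2) * ∑ x, |p x - q x|

noncomputable def dTV2 (k : ℕ) (η ρ : Fin k → Fin k → ℝ) : ℝ :=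
  (1/2) * ∑ x, ∑ y, |η x y - ρ x y|

theorem stmt5 (k : ℕ) (hk : 2 ≤ k) :
    ¬ ∃ (r : ℤ) (η η' : Fin k → Fin k → ℝ),
      -((k : ℤ) - 1) ≤ r ∧ r ≤ (k : ℤ) - 1 ∧
      IsJoint k η ∧ IsJoint k η' ∧
      margA k η = margA k η' ∧ margB k η = margB k η' ∧
      qUp k ((r : ℝ) - 1) η < 1/(2*(k:ℝ)-1) ∧
      qLow k (r : ℝ) η' > 1 - 1/(2*(k:ℝ)-1) := by
  rintro ⟨r, η, η', hr1, hr2, ⟨hη0, hη1⟩, ⟨hη'0, hη'1⟩, hA, hB, hU, hL⟩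
  have hk1 : (1:ℝ) ≤ (k:ℝ) - 1 := by
    have : (2:ℝ) ≤ (k:ℝ) := by exact_mod_cast hk
    linarith
  have hrR1 : -((k:ℝ) - 1) ≤ (r:ℝ) := by exact_mod_cast hr1
  have hrR2 : (r:ℝ) ≤ (k:ℝ) - 1 := by exact_mod_cast hr2
  -- ate depends only on marginals
  have hate : ∀ ρ : Fin k → Fin k → ℝ, ate k ρ =
      ∑ x : Fin k, ((x:ℕ):ℝ) * margA k ρ x - ∑ y : Fin k, ((y:ℕ):ℝ) * margB k ρ y := by
    intro ρ
    unfold ate margA margB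
    simp only [sub_mul, Finset.sum_sub_distrib, Finset.mul_sum]
    congr 1
    rw [Finset.sum_comm]
  have hateEq : ate k η = ate k η' := by
    rw [hate η, hate η', hA, hB]
  -- bounds on x, y
  have hxb : ∀ x : Fin k, ((x:ℕ):ℝ) ≤ (k:ℝ) - 1 := by
    intro x
    have := x.isLt
    have : (x:ℕ) ≤ k - 1 := by omega
    have h2 : ((x:ℕ):ℝ) ≤ ((k-1 : ℕ):ℝ) := by exact_mod_cast this
    have h3 : ((k-1:ℕ):ℝ) = (k:ℝ) - 1 := by
      have : 1 ≤ k := by omega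
      push_cast [this]; ring
    linarith [h2, h3.le, h3.ge]
  -- lower bound on ate η
  have h1 : (r:ℝ) - ((r:ℝ) + (k:ℝ) - 1) * qUp k ((r:ℝ) - 1) η ≤ ate k η := by
    have key : ∀ x ∈ Finset.univ (α := Fin k), ∀ y ∈ Finset.univ (α := Fin k),
        (r:ℝ) * η x y - ((r:ℝ) + (k:ℝ) - 1) * (if ((x:ℕ):ℝ) - ((y:ℕ):ℝ) ≤ (r:ℝ) - 1 then η x y else 0)
        ≤ (((x:ℕ):ℝ) - ((y:ℕ):ℝ)) * η x y := by
      intro x _ y _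
      by_cases hc : ((x:ℕ):ℝ) - ((y:ℕ):ℝ) ≤ (r:ℝ) - 1
      · simp only [if_pos hc]
        have h0 : 0 ≤ η x y := hη0 x y
        have hx0 : (0:ℝ) ≤ ((x:ℕ):ℝ) := by positivity
        have hyb := hxb y
        nlinarith
      · simp only [if_neg hc, mul_zero, sub_zero]
        have h' : (r:ℝ) - 1 < ((x:ℕ):ℝ) - ((y:ℕ):ℝ) := not_le.mp hc
        have hz : r - 1 < ((x:ℕ):ℤ) - ((y:ℕ):ℤ) := by exact_mod_cast h'
        have hz2 : (r:ℝ) ≤ ((x:ℕ):ℝ) - ((y:ℕ):ℝ) := by exact_mod_cast (by omega : r ≤ ((x:ℕ):ℤ) - ((y:ℕ):ℤ))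
        have h0 : 0 ≤ η x y := hη0 x y
        nlinarith
    have hsum := Finset.sum_le_sum (fun x hx => Finset.sum_le_sum (key x hx))
    unfold qUp ate
    have hexp : ∑ x : Fin k, ∑ y : Fin k, ((r:ℝ) * η x y - ((r:ℝ) + (k:ℝ) - 1) * (if ((x:ℕ):ℝ) - ((y:ℕ):ℝ) ≤ (r:ℝ) - 1 then η x y else 0))
        = (r:ℝ) * (∑ x : Fin k, ∑ y : Fin k, η x y) - ((r:ℝ) + (k:ℝ) - 1) * (∑ x : Fin k, ∑ y : Fin k, (if ((x:ℕ):ℝ) - ((y:ℕ):ℝ) ≤ (r:ℝ) - 1 then η x y else 0)) := by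
      simp only [Finset.sum_sub_distrib, Finset.mul_sum]
    rw [hexp, hη1, mul_one] at hsum
    linarith [hsum]
  -- upper bound on ate η'
  have h2 : ate k η' ≤ ((k:ℝ) - 1) - ((k:ℝ) - (r:ℝ)) * qLow k (r:ℝ) η' := by
    have key : ∀ x ∈ Finset.univ (α := Fin k), ∀ y ∈ Finset.univ (α := Fin k),
        (((x:ℕ):ℝ) - ((y:ℕ):ℝ)) * η' x y ≤
        ((k:ℝ) - 1) * η' x y - ((k:ℝ) - (r:ℝ)) * (if ((x:ℕ):ℝ) - ((y:ℕ):ℝ) < (r:ℝ) then η' x y else 0) := by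
      intro x _ y _
      by_cases hc : ((x:ℕ):ℝ) - ((y:ℕ):ℝ) < (r:ℝ)
      · simp only [if_pos hc]
        have h0 : 0 ≤ η' x y := hη'0 x y
        have hz : ((x:ℕ):ℤ) - ((y:ℕ):ℤ) < r := by exact_mod_cast hc
        have hz2 : ((x:ℕ):ℝ) - ((y:ℕ):ℝ) ≤ (r:ℝ) - 1 := by exact_mod_cast (by omega : ((x:ℕ):ℤ) - ((y:ℕ):ℤ) ≤ r - 1)
        nlinarith
      · simp only [if_neg hc, mul_zero, sub_zero]
        have h0 : 0 ≤ η' x y := hη'0 x y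
        have hy0 : (0:ℝ) ≤ ((y:ℕ):ℝ) := by positivity
        have hxB := hxb x
        nlinarith
    have hsum := Finset.sum_le_sum (fun x hx => Finset.sum_le_sum (key x hx))
    unfold qLow ate
    have hexp : ∑ x : Fin k, ∑ y : Fin k, (((k:ℝ) - 1) * η' x y - ((k:ℝ) - (r:ℝ)) * (if ((x:ℕ):ℝ) - ((y:ℕ):ℝ) < (r:ℝ) then η' x y else 0))
        = ((k:ℝ) - 1) * (∑ x : Fin k, ∑ y : Fin k, η' x y) - ((k:ℝ) - (r:ℝ)) * (∑ x : Fin k, ∑ y : Fin k, (if ((x:ℕ):ℝ) - ((y:ℕ):ℝ) < (r:ℝ) then η' x y else 0)) := by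
      simp only [Finset.sum_sub_distrib, Finset.mul_sum]
    rw [hexp, hη'1, mul_one] at hsum
    linarith [hsum]
  -- combine
  set ψ : ℝ := 1/(2*(k:ℝ)-1) with hψ
  have h2k : 0 < 2*(k:ℝ)-1 := by linarith
  have hψpos : 0 < ψ := by
    rw [hψ]; positivity
  have hψeq : (2*(k:ℝ)-1) * ψ = 1 := by
    rw [hψ]; field_simp
  have hq0 : 0 ≤ qUp k ((r:ℝ) - 1) η := by
    unfold qUp
    apply Finset.sum_nonneg; intro x _
    apply Finset.sum_nonneg; intro y _
    split <;> simp [hη0 x y]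
  have hq'1 : qLow k (r:ℝ) η' ≤ 1 := by
    have : qLow k (r:ℝ) η' ≤ ∑ x : Fin k, ∑ y : Fin k, η' x y := by
      unfold qLow
      apply Finset.sum_le_sum; intro x _
      apply Finset.sum_le_sum; intro y _
      split <;> simp [hη'0 x y]
    linarith [hη'1, this]
  nlinarith [h1, h2, hateEq, hU, hL, hq0, hq'1,
    mul_le_mul_of_nonneg_left hU.le (by linarith : (0:ℝ) ≤ (r:ℝ) + (k:ℝ) - 1),
    mul_le_mul_of_nonneg_left hL.le (by linarith : (0:ℝ) ≤ (k:ℝ) - (r:ℝ))]
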